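/- Let x : [0,t] → [x_B, ∞) satisfy x'(s) = λ1(x(s),s) with 0 < S(x(s),s) ≤ λ1(x(s),s), and let k : [x_B, ∞) → [0,∞) be nonincreasing with ∫_{x_B}^∞ k(y) dy < ∞ and bounded by ‖k‖. Then ∫₀^t k(x(s))² S(x(s),s) ds ≤ ‖k‖ ∫_{x_B}^∞ k(y) dy. -/

import Mathlib

open Set MeasureTheory

theorem stmt16 (x_B t K : ℝ) (ht : 0 ≤ t)
    (x S lam1 k : ℝ → ℝ)
    (hx0 : x_B ≤ x 0)
    (hx : ∀ s ∈ Icc 0 t, HasDerivAt x (lam1 s) s)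
    (hS : ∀ s ∈ Icc 0 t, 0 < S s ∧ S s ≤ lam1 s)
    (hSc : ContinuousOn S (Icc 0 t))
    (hl1c : ContinuousOn lam1 (Icc 0 t))
    (hkanti : AntitoneOn k (Ici x_B))
    (hk0 : ∀ y, 0 ≤ k y) (hkK : ∀ y, k y ≤ K)
    (hkint : MeasureTheory.IntegrableOn k (Ici x_B)) :
    ∫ s in (0:ℝ)..t, (k (x s))^2 * S s ≤ K * ∫ y in Ici x_B, k y := by
  have hK0 : 0 ≤ K := (hk0 0).trans (hkK 0)
  set k' : ℝ → ℝ := fun y => k (max y x_B) with hk'def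
  have hk'anti : Antitone k' := fun a b hab =>
    hkanti (mem_Ici.2 (le_max_right _ _)) (mem_Ici.2 (le_max_right _ _)) (max_le_max hab le_rfl)
  have hxc : ContinuousOn x (Icc 0 t) := fun s hs =>
    (hx s hs).continuousAt.continuousWithinAt
  have hmono : StrictMonoOn x (Icc 0 t) := by
    apply strictMonoOn_of_deriv_pos (convex_Icc 0 t) hxc
    intro s hs
    rw [interior_Icc] at hs
    have hs' := Ioo_subset_Icc_self hs
    rw [(hx s hs').deriv]
    exact lt_of_lt_of_le (hS s hs').1 (hS s hs').2
  have hxB : ∀ s ∈ Icc 0 t, x_B ≤ x s := by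
    intro s hs
    rcases eq_or_lt_of_le hs.1 with h | h
    · rw [← h]; exact hx0
    · exact hx0.trans (hmono (left_mem_Icc.2 ht) hs h).le
  have himg : ∫ y in x '' Icc 0 t, k' y = ∫ s in Icc 0 t, |lam1 s| • k' (x s) :=
    MeasureTheory.integral_image_eq_integral_abs_deriv_smul measurableSet_Icc
      (fun s hs => (hx s hs).hasDerivWithinAt) hmono.injOn k'
  obtain ⟨M, hM⟩ := isCompact_Icc.exists_bound_of_continuousOn hl1c
  have hxm : AEMeasurable x (volume.restrict (Icc 0 t)) :=
    hxc.aemeasurable measurableSet_Icc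
  have hgm : AEStronglyMeasurable (fun s => K * (|lam1 s| * k' (x s)))
      (volume.restrict (Icc 0 t)) := by
    apply AEMeasurable.aestronglyMeasurable
    exact aemeasurable_const.mul ((continuous_abs.measurable.comp_aemeasurable (hl1c.aemeasurable measurableSet_Icc)).mul
      (hk'anti.measurable.comp_aemeasurable hxm))
  have hgint : IntegrableOn (fun s => K * (|lam1 s| * k' (x s))) (Icc 0 t) := by
    apply Integrable.mono' (g := fun _ => K * (M * K))
      (integrableOn_const measure_Icc_lt_top.ne) hgm
    filter_upwards [ae_restrict_mem measurableSet_Icc] with s hs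
    have h1 : |lam1 s| ≤ M := (hM s hs).trans_eq' (Real.norm_eq_abs _).symm
    have h2 : 0 ≤ k' (x s) := hk0 _
    have h3 : k' (x s) ≤ K := hkK _
    have h4 : 0 ≤ |lam1 s| := abs_nonneg _
    rw [Real.norm_eq_abs, abs_of_nonneg (by positivity)]
    have : |lam1 s| * k' (x s) ≤ M * K := mul_le_mul h1 h3 h2 (h4.trans h1)
    exact mul_le_mul_of_nonneg_left this hK0
  rw [intervalIntegral.integral_of_le ht, ← MeasureTheory.integral_Icc_eq_integral_Ioc]
  calc ∫ s in Icc 0 t, (k (x s))^2 * S s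
      ≤ ∫ s in Icc 0 t, K * (|lam1 s| * k' (x s)) := by
        apply integral_mono_of_nonneg ?_ hgint ?_
        · filter_upwards [ae_restrict_mem measurableSet_Icc] with s hs
          exact mul_nonneg (sq_nonneg _) (hS s hs).1.le
        · filter_upwards [ae_restrict_mem measurableSet_Icc] with s hs
          have h1 := hS s hs
          have h2 : k' (x s) = k (x s) := by
            simp only [hk'def]; rw [max_eq_left (hxB s hs)]
          rw [h2]
          have h3 : S s ≤ |lam1 s| := h1.2.trans (le_abs_self _)
          nlinarith [mul_nonneg (mul_nonneg hK0 (hk0 (x s))) (sub_nonneg.2 h3),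
            mul_nonneg (sub_nonneg.2 (hkK (x s))) (mul_nonneg (hk0 (x s)) h1.1.le)]
    _ = K * ∫ s in Icc 0 t, |lam1 s| • k' (x s) := by
        simp only [smul_eq_mul]
        rw [MeasureTheory.integral_const_mul]
    _ = K * ∫ y in x '' Icc 0 t, k' y := by rw [himg]
    _ = K * ∫ y in x '' Icc 0 t, k y := by
        congr 1
        apply setIntegral_congr_fun (isCompact_Icc.image_of_continuousOn hxc).measurableSet
        intro y hy
        obtain ⟨s, hs, rfl⟩ := hy
        simp only [hk'def]; rw [max_eq_left (hxB s hs)]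
    _ ≤ K * ∫ y in Ici x_B, k y := by
        apply mul_le_mul_of_nonneg_left _ hK0
        apply setIntegral_mono_set hkint
        · filter_upwards with y using hk0 y
        · exact HasSubset.Subset.eventuallyLE (fun y hy => by
            obtain ⟨s, hs, rfl⟩ := hy; exact hxB s hs)
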